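/- Let μ be a probability measure on a measurable space Ω, let W, E1, E2 be measurable sets, and let d, q1, q2 be natural numbers with q1 < 2^d and 1 ≤ q2. Suppose μ[W | E2ᶜ] ≤ 1/2, μ(E1) ≤ q1/2^d, μ[W | E2 ∩ E1ᶜ] ≤ 1/q2, and μ[E2 | E1ᶜ] ≤ q2/(2^d − q1), all in the extended nonnegative reals. Then 2·(μ(W)).toReal − 1 ≤ q1/2^(d−1) + 2/(2^d − q1), where d ≥ 1. -/

import Mathlib

open MeasureTheory ProbabilityTheory

/-- Advantage bound concluding the proof of Theorem 2: under the same hypotheses as the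
concrete probability bound, the adversary's advantage satisfies
`2·μ(W).toReal − 1 ≤ q1/2^(d−1) + 2/(2^d − q1)` (with `d ≥ 1`). -/
theorem stmt_5 {Ω : Type*} [MeasurableSpace Ω] (μ : Measure Ω) [IsProbabilityMeasure μ]
    (W E1 E2 : Set Ω) (hW : MeasurableSet W) (hE1 : MeasurableSet E1)
    (hE2 : MeasurableSet E2) (d q1 q2 : ℕ) (hd : 1 ≤ d) (hq1 : q1 < 2 ^ d) (hq2 : 1 ≤ q2)
    (h1 : μ[W | E2ᶜ] ≤ 1 / 2)
    (h2 : μ E1 ≤ (q1 : ENNReal) / 2 ^ d)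
    (h3 : μ[W | E2 ∩ E1ᶜ] ≤ 1 / (q2 : ENNReal))
    (h4 : μ[E2 | E1ᶜ] ≤ (q2 : ENNReal) / ((2 : ENNReal) ^ d - q1)) :
    2 * (μ W).toReal - 1 ≤ (q1 : ℝ) / 2 ^ (d - 1) + 2 / ((2 : ℝ) ^ d - q1) := by
  -- basic fact: μ (s ∩ t) ≤ μ[t|s] * μ s
  have key : ∀ (s t : Set Ω), MeasurableSet s → μ (s ∩ t) ≤ μ[t|s] * μ s := by
    intro s t hs
    by_cases h : μ s = 0
    · have : μ (s ∩ t) = 0 :=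
        le_antisymm (h ▸ measure_mono Set.inter_subset_left) bot_le
      simp [this]
    · rw [cond_apply hs μ t, mul_comm, ← mul_assoc,
        ENNReal.mul_inv_cancel h (measure_ne_top μ s), one_mul]
  have hA : μ (W ∩ E2ᶜ) ≤ 1 / 2 := by
    calc μ (W ∩ E2ᶜ) = μ (E2ᶜ ∩ W) := by rw [Set.inter_comm]
    _ ≤ μ[W|E2ᶜ] * μ E2ᶜ := key _ _ hE2.compl
    _ ≤ (1 / 2) * 1 := by
        exact mul_le_mul' h1 prob_le_one
    _ = 1 / 2 := by rw [mul_one]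
  have hN0 : ((2 : ENNReal) ^ d - q1) ≠ 0 := by
    have : (q1 : ENNReal) < 2 ^ d := by
      rw [show ((2 : ENNReal) ^ d) = ((2 ^ d : ℕ) : ENNReal) by push_cast; ring]
      exact_mod_cast hq1
    simpa [tsub_eq_zero_iff_le] using this.not_ge
  have hB : μ ((E2 ∩ E1ᶜ) ∩ W) ≤ 1 / ((2 : ENNReal) ^ d - q1) := by
    have h5 : μ (E2 ∩ E1ᶜ) ≤ (q2 : ENNReal) / ((2 : ENNReal) ^ d - q1) := by
      calc μ (E2 ∩ E1ᶜ) = μ (E1ᶜ ∩ E2) := by rw [Set.inter_comm]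
      _ ≤ μ[E2|E1ᶜ] * μ E1ᶜ := key _ _ hE1.compl
      _ ≤ ((q2 : ENNReal) / ((2 : ENNReal) ^ d - q1)) * 1 :=
          mul_le_mul' h4 prob_le_one
      _ = _ := mul_one _
    calc μ ((E2 ∩ E1ᶜ) ∩ W) ≤ μ[W|E2 ∩ E1ᶜ] * μ (E2 ∩ E1ᶜ) :=
        key _ _ (hE2.inter hE1.compl)
    _ ≤ (1 / (q2 : ENNReal)) * ((q2 : ENNReal) / ((2 : ENNReal) ^ d - q1)) :=
        mul_le_mul' h3 h5
    _ = 1 / ((2 : ENNReal) ^ d - q1) := by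
        have hq2' : (q2 : ENNReal) ≠ 0 := Nat.cast_ne_zero.mpr (by omega)
        rw [div_eq_mul_inv, div_eq_mul_inv, div_eq_mul_inv, one_mul, one_mul,
          ← mul_assoc, ENNReal.inv_mul_cancel hq2' (by exact_mod_cast ENNReal.natCast_ne_top q2), one_mul]
  have hcover : W ⊆ (W ∩ E2ᶜ) ∪ (E1 ∪ ((E2 ∩ E1ᶜ) ∩ W)) := by
    intro ω hω
    by_cases hω2 : ω ∈ E2
    · by_cases hω1 : ω ∈ E1
      · exact Or.inr (Or.inl hω1)
      · exact Or.inr (Or.inr ⟨⟨hω2, hω1⟩, hω⟩)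
    · exact Or.inl ⟨hω, hω2⟩
  have hle : μ W ≤ 1 / 2 + ((q1 : ENNReal) / 2 ^ d + 1 / ((2 : ENNReal) ^ d - q1)) := by
    calc μ W ≤ μ ((W ∩ E2ᶜ) ∪ (E1 ∪ ((E2 ∩ E1ᶜ) ∩ W))) := measure_mono hcover
    _ ≤ μ (W ∩ E2ᶜ) + (μ E1 + μ ((E2 ∩ E1ᶜ) ∩ W)) :=
        (measure_union_le _ _).trans (add_le_add_right (measure_union_le _ _) _)
    _ ≤ _ := add_le_add hA (add_le_add h2 hB)
  -- pass to reals
  set N : ℕ := 2 ^ d - q1 with hN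
  have hNcast : ((2 : ENNReal) ^ d - q1) = (N : ENNReal) := by
    rw [hN]
    push_cast [Nat.cast_sub hq1.le]
    ring
  have hNpos : 0 < N := Nat.sub_pos_of_lt hq1
  have hreal : (μ W).toReal ≤ 1 / 2 + ((q1 : ℝ) / 2 ^ d + 1 / (N : ℝ)) := by
    have hfin : (1 / 2 + ((q1 : ENNReal) / 2 ^ d + 1 / ((2 : ENNReal) ^ d - q1))) ≠ ⊤ := by
      rw [hNcast]
      simp [ENNReal.div_eq_top, hNpos.ne', ENNReal.add_eq_top]
    have := ENNReal.toReal_mono hfin hle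
    rw [hNcast] at this
    convert this using 1
    rw [ENNReal.toReal_add (by simp) (by simp [ENNReal.add_eq_top, ENNReal.div_eq_top, hNpos.ne']),
      ENNReal.toReal_add (by simp [ENNReal.div_eq_top]) (by simp [ENNReal.div_eq_top, hNpos.ne']),
      ENNReal.toReal_div, ENNReal.toReal_div, ENNReal.toReal_div]
    norm_num
  have hNr : (N : ℝ) = (2 : ℝ) ^ d - q1 := by
    rw [hN, Nat.cast_sub hq1.le]; push_cast; ring
  rw [← hNr]
  have hpow : (2 : ℝ) ^ d = 2 * 2 ^ (d - 1) := by
    rw [← pow_succ']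
    congr 1
    omega
  have hNrpos : (0 : ℝ) < N := by exact_mod_cast hNpos
  have h2d : (0 : ℝ) < 2 ^ d := by positivity
  calc 2 * (μ W).toReal - 1 ≤ 2 * (1 / 2 + ((q1 : ℝ) / 2 ^ d + 1 / (N : ℝ))) - 1 := by
        linarith
  _ = (q1 : ℝ) / 2 ^ (d - 1) + 2 / (N : ℝ) := by
      rw [hpow]
      field_simp
      ring
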